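/- Let A, B, C be points in the Euclidean plane with B ≠ A and B ≠ C, and suppose β = ∠ABC > 0. Then (dist A B + dist B C) · sin(β/2) ≤ dist A C. -/
import Mathlib

open Real EuclideanGeometry

/-- For points `A, B, C` in the plane with `B ≠ A`, `B ≠ C` and `β = ∠ABC > 0`, one has
`(AB + BC) · sin(β/2) ≤ AC`. -/
theorem sine_estimate (A B C : EuclideanSpace ℝ (Fin 2))
    (hBA : B ≠ A) (hBC : B ≠ C) (hβ : 0 < ∠ A B C) :
    (dist A B + dist B C) * Real.sin (∠ A B C / 2) ≤ dist A C := by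
  set a := dist A B with ha
  set b := dist B C with hb
  set β := ∠ A B C with hβdef
  have hβπ : β ≤ π := EuclideanGeometry.angle_le_pi _ _ _
  have hs : 0 ≤ Real.sin (β / 2) :=
    Real.sin_nonneg_of_nonneg_of_le_pi (by linarith) (by linarith [Real.pi_pos])
  have hcos : -1 ≤ Real.cos β := Real.neg_one_le_cos β
  have hlaw : dist A C ^ 2 = a ^ 2 + b ^ 2 - 2 * a * b * Real.cos β :=
by
    have h := EuclideanGeometry.law_cos A B C
    rw [dist_comm C B] at h
    nlinarith [h]
  have h2 : Real.sin (β / 2) ^ 2 = 1 / 2 - Real.cos (2 * (β / 2)) / 2 := Real.sin_sq_eq_half_sub _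
  rw [show 2 * (β / 2) = β by ring] at h2
  have hsq : ((a + b) * Real.sin (β / 2)) ^ 2 ≤ dist A C ^ 2 := by
    nlinarith [sq_nonneg (a - b), sq_nonneg (a + b)]
  have hnn : 0 ≤ (a + b) * Real.sin (β / 2) :=
    mul_nonneg (by positivity) hs
  nlinarith [dist_nonneg (x := A) (y := C)]
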